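/- Let M ⊂ V_C = V ⊕ V be a submanifold of a complexified symplectic vector space which is Lagrangian for both ω_1 and ω_2 (real and imaginary parts of the complex-bilinear extension ω^c of the symplectic form ω on V). Then the tangent space T_m M at each point is a complex subspace of V_C which is Lagrangian for ω^c, i.e., ω^c vanishes on T_m M and I(T_m M) = T_m M. (Linear algebra version: if L ⊂ V ⊕ V is a real subspace of dimension 2n = dim V on which both ω_1 and ω_2 vanish, and the restriction of g((x,y),(x',y')) = (1/2)(ω(x,y')+ω(x',y)) to L is nondegenerate, then L is I-invariant, where I(x,y)=(-y,x).) -/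
import Mathlib


open Module

theorem stmt19 {V : Type*} [AddCommGroup V] [Module ℝ V] [FiniteDimensional ℝ V]
    (n : ℕ) (hV : finrank ℝ V = 2 * n)
    (ω : V →ₗ[ℝ] V →ₗ[ℝ] ℝ) (halt : ∀ v, ω v v = 0)
    (hnd : ∀ v, (∀ u, ω v u = 0) → v = 0)
    (L : Submodule ℝ (V × V)) (hLdim : finrank ℝ L = 2 * n)
    (hω1 : ∀ p ∈ L, ∀ q ∈ L, ω p.1 q.1 - ω p.2 q.2 = 0)
    (hω2 : ∀ p ∈ L, ∀ q ∈ L, ω p.1 q.2 - ω q.1 p.2 = 0)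
    (hg : ∀ p ∈ L, (∀ q ∈ L, (1 / 2 : ℝ) * (ω p.1 q.2 + ω q.1 p.2) = 0) → p = 0) :
    Submodule.map ((-(LinearMap.snd ℝ V V)).prod (LinearMap.fst ℝ V V)) L = L := by
  have hskew : ∀ a b : V, ω a b = -ω b a := by
    intro a b
    have h := halt (a + b)
    have ha := halt a
    have hb := halt b
    simp only [map_add, LinearMap.add_apply] at h
    linarith
  -- first projection restricted to L
  set f1 : L →ₗ[ℝ] V := (LinearMap.fst ℝ V V).comp L.subtype with hf1def
  set f2 : L →ₗ[ℝ] V := (LinearMap.snd ℝ V V).comp L.subtype with hf2def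
  have hrank : finrank ℝ L = finrank ℝ V := by rw [hLdim, hV]
  have hf1inj : Function.Injective f1 := by
    rw [← LinearMap.ker_eq_bot, LinearMap.ker_eq_bot']
    intro m hm
    have hm1 : (m : V × V).1 = 0 := hm
    have : (m : V × V) = 0 := by
      apply hg _ m.2
      intro q hq
      have h2 := hω2 q hq (m : V × V) m.2
      rw [hm1] at h2 ⊢
      simp only [map_zero, LinearMap.zero_apply, sub_zero] at h2
      simp [h2]
    exact Subtype.ext this
  have hf2inj : Function.Injective f2 := by
    rw [← LinearMap.ker_eq_bot, LinearMap.ker_eq_bot']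
    intro m hm
    have hm2 : (m : V × V).2 = 0 := hm
    have : (m : V × V) = 0 := by
      apply hg _ m.2
      intro q hq
      have h2 := hω2 (m : V × V) m.2 q hq
      rw [hm2] at h2 ⊢
      simp only [map_zero, sub_zero] at h2
      simp [h2]
    exact Subtype.ext this
  have hf1surj : Function.Surjective f1 :=
    (LinearMap.injective_iff_surjective_of_finrank_eq_finrank hrank).mp hf1inj
  have hf2surj : Function.Surjective f2 :=
    (LinearMap.injective_iff_surjective_of_finrank_eq_finrank hrank).mp hf2inj
  -- key claim
  have key : ∀ x y : V, (x, y) ∈ L → ((-y, x) : V × V) ∈ L := by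
    intro x y hxy
    obtain ⟨q, hq1⟩ := hf1surj (-y)
    have hqL : (q : V × V) ∈ L := q.2
    have hq1' : (q : V × V).1 = -y := hq1
    have hq2 : (q : V × V).2 = x := by
      have : (q : V × V).2 - x = 0 := by
        apply hnd
        intro u
        obtain ⟨p, hp2⟩ := hf2surj u
        have hpL : (p : V × V) ∈ L := p.2
        have hp2' : (p : V × V).2 = u := hp2
        have h1 := hω1 (q : V × V) hqL (p : V × V) hpL
        have h2 := hω2 (x, y) hxy (p : V × V) hpL
        have hs := hskew y (p : V × V).1
        rw [hq1'] at h1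
        simp only [map_neg, LinearMap.neg_apply] at h1
        rw [map_sub, LinearMap.sub_apply, ← hp2']
        -- ω q.2 p.2 = -ω y p.1 = ω p.1 y = ω x p.2
        have : ω (q : V × V).2 (p : V × V).2 = ω x (p : V × V).2 := by linarith
        linarith
      have := sub_eq_zero.mp this
      exact this
    have : ((-y, x) : V × V) = (q : V × V) := by
      rw [Prod.ext_iff]; exact ⟨hq1'.symm, hq2.symm⟩
    rw [this]; exact hqL
  apply le_antisymm
  · rintro _ ⟨⟨x, y⟩, hxy, rfl⟩
    simpa using key x y hxy
  · rintro ⟨x, y⟩ h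
    refine ⟨(y, -x), ?_, by simp⟩
    have := L.neg_mem (key x y h)
    simpa using this
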